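/- Let A be an m×m matrix with nonpositive off-diagonal entries, rows summing to 0, and irreducible (for every nonempty proper subset W of indices there exist i ∈ W and j ∉ W with a_{ij} < 0). Then for every t > 0 all entries of e^{-At} are strictly positive. -/

import Mathlib

open NormedSpace

/-- If `A` has nonpositive off-diagonal entries, rows summing to `0`, and is
irreducible (for every nonempty proper subset `W` of indices there exist `i ∈ W` and
`j ∉ W` with `A i j < 0`), then for every `t > 0` all entries of `e^{-At}` are strictly
positive. -/
theorem exp_neg_smul_positive_of_irreducible (m : ℕ) (A : Matrix (Fin m) (Fin m) ℝ)
    (hA1 : ∀ i j, i ≠ j → A i j ≤ 0) (hA2 : ∀ i, ∑ j, A i j = 0)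
    (hA3 : ∀ W : Finset (Fin m), W.Nonempty → W ≠ Finset.univ →
      ∃ i ∈ W, ∃ j ∉ W, A i j < 0) :
    ∀ t : ℝ, 0 < t → ∀ i j, 0 < NormedSpace.exp (-(t • A)) i j := by
  classical
  intro t ht i j
  set c : ℝ := 1 + t * ∑ k, |A k k| with hc_def
  have hc : ∀ a, t * A a a < c := by
    intro a
    have h1 : A a a ≤ |A a a| := le_abs_self _
    have h2 : |A a a| ≤ ∑ k, |A k k| :=
      Finset.single_le_sum (f := fun k => |A k k|) (fun k _ => abs_nonneg _) (Finset.mem_univ a)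
    nlinarith
  set M : Matrix (Fin m) (Fin m) ℝ := c • (1 : Matrix (Fin m) (Fin m) ℝ) - t • A with hM_def
  have hM_entry : ∀ a b, M a b = c * (if a = b then (1 : ℝ) else 0) - t * A a b := by
    intro a b
    simp [hM_def, Matrix.sub_apply, Matrix.smul_apply, Matrix.one_apply, smul_eq_mul]
  have hMnn : ∀ a b, 0 ≤ M a b := by
    intro a b
    by_cases h : a = b
    · rw [hM_entry, if_pos h, mul_one]; subst h; linarith [hc a]
    · rw [hM_entry, if_neg h, mul_zero, zero_sub]
      nlinarith [mul_nonneg ht.le (neg_nonneg.mpr (hA1 a b h))]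
  have hMoff : ∀ a b, a ≠ b → A a b < 0 → 0 < M a b := by
    intro a b h hab
    rw [hM_entry, if_neg h, mul_zero, zero_sub]
    nlinarith
  have hMpow : ∀ k a b, 0 ≤ (M ^ k) a b := by
    intro k
    induction k with
    | zero =>
      intro a b
      rw [pow_zero, Matrix.one_apply]
      split <;> norm_num
    | succ n ih =>
      intro a b
      rw [pow_succ, Matrix.mul_apply]
      exact Finset.sum_nonneg fun x _ => mul_nonneg (ih a x) (hMnn x b)
  have hreach : ∃ k, 0 < (M ^ k) i j := by
    by_contra hcon
    push_neg at hcon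
    set W : Finset (Fin m) := Finset.univ.filter (fun b => ∃ k, 0 < (M ^ k) i b) with hW
    have hiW : i ∈ W := by
      refine Finset.mem_filter.mpr ⟨Finset.mem_univ _, ⟨0, ?_⟩⟩
      rw [pow_zero, Matrix.one_apply_eq]; norm_num
    have hjW : j ∉ W := by
      intro hj
      obtain ⟨k, hk⟩ := (Finset.mem_filter.mp hj).2
      exact absurd hk (not_lt.mpr (hcon k))
    have hWne : W ≠ Finset.univ := fun h => hjW (h ▸ Finset.mem_univ j)
    obtain ⟨a, haW, b, hbW, hab⟩ := hA3 W ⟨i, hiW⟩ hWne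
    obtain ⟨k, hk⟩ := (Finset.mem_filter.mp haW).2
    have hne : a ≠ b := fun h => hbW (h ▸ haW)
    have hpos : 0 < (M ^ (k + 1)) i b := by
      rw [pow_succ, Matrix.mul_apply]
      refine Finset.sum_pos' (fun x _ => mul_nonneg (hMpow k i x) (hMnn x b)) ?_
      exact ⟨a, Finset.mem_univ a, mul_pos hk (hMoff a b hne hab)⟩
    exact hbW (Finset.mem_filter.mpr ⟨Finset.mem_univ _, ⟨k + 1, hpos⟩⟩)
  have hdecomp : -(t • A) = M + (-c) • (1 : Matrix (Fin m) (Fin m) ℝ) := by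
    rw [hM_def]
    module
  have hcomm : Commute M ((-c) • (1 : Matrix (Fin m) (Fin m) ℝ)) :=
    (Commute.one_right M).smul_right _
  have hsplit : NormedSpace.exp (-(t • A)) =
      NormedSpace.exp M * NormedSpace.exp ((-c) • (1 : Matrix (Fin m) (Fin m) ℝ)) := by
    rw [hdecomp]
    exact Matrix.exp_add_of_commute M _ hcomm
  have hscal : ((-c) • (1 : Matrix (Fin m) (Fin m) ℝ)) =
      Matrix.diagonal (fun _ => (-c : ℝ)) := by
    ext a b
    by_cases h : a = b <;>
      simp [Matrix.one_apply, Matrix.diagonal_apply, h]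
  have hexpdiag : NormedSpace.exp ((-c) • (1 : Matrix (Fin m) (Fin m) ℝ)) =
      Matrix.diagonal (fun _ => Real.exp (-c)) := by
    have hfun : (NormedSpace.exp fun _ : Fin m => (-c : ℝ)) = fun _ => Real.exp (-c) := by
      funext x
      rw [Pi.coe_exp, ← Real.exp_eq_exp_ℝ]
    rw [hscal, Matrix.exp_diagonal, hfun]
  rw [hsplit, hexpdiag, Matrix.mul_diagonal]
  refine mul_pos ?_ (Real.exp_pos _)
  letI : SeminormedRing (Matrix (Fin m) (Fin m) ℝ) := Matrix.linftyOpSemiNormedRing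
  letI : NormedRing (Matrix (Fin m) (Fin m) ℝ) := Matrix.linftyOpNormedRing
  letI : NormedAlgebra ℝ (Matrix (Fin m) (Fin m) ℝ) := Matrix.linftyOpNormedAlgebra
  have hsum : Summable fun n : ℕ => ((Nat.factorial n : ℝ))⁻¹ • M ^ n := expSeries_summable' (𝕂 := ℝ) M
  have hsum1 : Summable fun n : ℕ => (((Nat.factorial n : ℝ))⁻¹ • M ^ n) i := Pi.summable.mp hsum i
  have hsum2 : Summable fun n : ℕ => (((Nat.factorial n : ℝ))⁻¹ • M ^ n) i j := Pi.summable.mp hsum1 j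
  have hent : NormedSpace.exp M i j = ∑' n : ℕ, (((Nat.factorial n : ℝ))⁻¹ • M ^ n) i j := by
    rw [exp_eq_tsum ℝ]
    show (∑' n : ℕ, ((Nat.factorial n : ℝ))⁻¹ • M ^ n) i j = _
    erw [tsum_apply hsum, tsum_apply hsum1]
  rw [hent]
  obtain ⟨k, hk⟩ := hreach
  refine Summable.tsum_pos hsum2 (fun n => ?_) k ?_
  · exact mul_nonneg (by positivity) (hMpow n i j)
  · exact mul_pos (by positivity) hk
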